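/- Let ψ : ℝ → ℂ be a continuous negative definite function given in Lévy–Khintchine form ψ(ξ) = q − i·b·ξ + σ²ξ² + ∫_ℝ (1 − e^{iξy} + iξy·1_{|y|≤1}) μ(dy), with q ≥ 0, b ∈ ℝ, σ² ≥ 0 and μ a nonnegative Borel measure on ℝ∖{0} with ∫ min(y²,1) μ(dy) < ∞. For a Schwartz function f : ℝ → ℂ define A f(x) = −e^{-x} (2π)^{-1/2} ∫_ℝ e^{iξx} ψ(ξ) 𝓕f(ξ) dξ (the integral converges absolutely since |ψ(ξ)| grows at most quadratically and 𝓕f is Schwartz). Then the function x ↦ A f(x)·conj(f(x))·e^x is Lebesgue integrable on ℝ and Re ∫_ℝ A f(x)·conj(f(x))·e^x dx ≤ 0; that is, A is dissipative on the Schwartz functions with respect to the L²(ℝ,e) inner product. -/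

import Mathlib

open MeasureTheory Set
open scoped ENNReal

/-- The Fourier integral `𝓕g(ξ) = (2π)^{-1/2} ∫ e^{-iξx} g(x) dx`. -/
noncomputable def fourierInt (g : ℝ → ℂ) (ξ : ℝ) : ℂ :=
  (Real.sqrt (2 * Real.pi) : ℂ)⁻¹ * ∫ x : ℝ, Complex.exp (-Complex.I * ξ * x) * g x

namespace PdoAux

noncomputable def K (ξ y : ℝ) : ℂ :=
  1 - Complex.exp (Complex.I * ξ * y) +
    Set.indicator {y : ℝ | |y| ≤ 1} (fun y : ℝ => Complex.I * ξ * y) y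

lemma norm_exp_I_mul (a b : ℝ) : ‖Complex.exp (Complex.I * a * b)‖ = 1 := by
  rw [show Complex.I * a * b = (a * b : ℝ) * Complex.I by push_cast; ring]
  exact Complex.norm_exp_ofReal_mul_I _

lemma K_norm_le (ξ y : ℝ) : ‖K ξ y‖ ≤ (3 * ξ ^ 2 + 2) * min (y ^ 2) 1 := by
  by_cases hy : |y| ≤ 1
  · have hymem : y ∈ {y : ℝ | |y| ≤ 1} := hy
    have hy2 : y ^ 2 ≤ 1 := by nlinarith [sq_abs y, abs_nonneg y]
    have hmin : min (y ^ 2) 1 = y ^ 2 := min_eq_left hy2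
    set θ : ℝ := ξ * y with hθ
    have hrw : K ξ y = -(Complex.exp ((θ : ℂ) * Complex.I) - 1 - (θ : ℂ) * Complex.I) := by
      simp only [K, Set.indicator_of_mem hymem, hθ, Complex.ofReal_mul]
      ring_nf
    have hbound : ‖Complex.exp ((θ : ℂ) * Complex.I) - 1 - (θ : ℂ) * Complex.I‖ ≤ 3 * θ ^ 2 := by
      have habs : ‖(θ : ℂ) * Complex.I‖ = |θ| := by
        simp [map_mul]
      by_cases hθ1 : |θ| ≤ 1
      · have h1 : ‖(θ : ℂ) * Complex.I‖ ≤ 1 := by rw [habs]; exact hθ1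
        have h2 := Complex.norm_exp_sub_one_sub_id_le h1
        rw [habs] at h2
        calc ‖Complex.exp ((θ : ℂ) * Complex.I) - 1 - (θ : ℂ) * Complex.I‖ ≤ |θ| ^ 2 := h2
          _ ≤ 3 * θ ^ 2 := by nlinarith [sq_abs θ]
      · push_neg at hθ1
        have h3 : ‖Complex.exp ((θ : ℂ) * Complex.I) - 1 - (θ : ℂ) * Complex.I‖ ≤
            ‖Complex.exp ((θ : ℂ) * Complex.I)‖ + 1 + |θ| := by
          calc ‖Complex.exp ((θ : ℂ) * Complex.I) - 1 - (θ : ℂ) * Complex.I‖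
              ≤ ‖Complex.exp ((θ : ℂ) * Complex.I) - 1‖ + ‖(θ : ℂ) * Complex.I‖ :=
                norm_sub_le _ _
            _ ≤ ‖Complex.exp ((θ : ℂ) * Complex.I)‖ + ‖(1 : ℂ)‖ + ‖(θ : ℂ) * Complex.I‖ := by
                gcongr ?_ + _; exact norm_sub_le _ _
            _ = ‖Complex.exp ((θ : ℂ) * Complex.I)‖ + 1 + |θ| := by
                simp [map_mul]
        have h4 : ‖Complex.exp ((θ : ℂ) * Complex.I)‖ = 1 := Complex.norm_exp_ofReal_mul_I θ
        rw [h4] at h3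
        have : (2 : ℝ) + |θ| ≤ 3 * θ ^ 2 := by nlinarith [sq_abs θ, abs_nonneg θ]
        linarith
    rw [hrw, norm_neg, hmin]
    calc ‖Complex.exp ((θ : ℂ) * Complex.I) - 1 - (θ : ℂ) * Complex.I‖ ≤ 3 * θ ^ 2 := hbound
      _ = 3 * ξ ^ 2 * y ^ 2 := by rw [hθ]; ring
      _ ≤ (3 * ξ ^ 2 + 2) * y ^ 2 := by nlinarith [sq_nonneg y]
  · have hymem : y ∉ {y : ℝ | |y| ≤ 1} := hy
    push_neg at hy
    have hmin : min (y ^ 2) 1 = 1 := by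
      apply min_eq_right; nlinarith [sq_abs y]
    simp only [K, Set.indicator_of_notMem hymem, add_zero, hmin, mul_one]
    calc ‖(1 : ℂ) - Complex.exp (Complex.I * ξ * y)‖
        ≤ ‖(1 : ℂ)‖ + ‖Complex.exp (Complex.I * ξ * y)‖ := norm_sub_le _ _
      _ = 2 := by rw [norm_exp_I_mul, norm_one]; norm_num
      _ ≤ 3 * ξ ^ 2 + 2 := by nlinarith [sq_nonneg ξ]

lemma K_re (ξ y : ℝ) : (K ξ y).re = 1 - Real.cos (ξ * y) := by
  have hre : (Complex.exp (Complex.I * ξ * y)).re = Real.cos (ξ * y) := by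
    rw [show Complex.I * ξ * y = (ξ * y : ℝ) * Complex.I by push_cast; ring]
    exact Complex.exp_ofReal_mul_I_re _
  by_cases hy : y ∈ {y : ℝ | |y| ≤ 1}
  · simp only [K, Set.indicator_of_mem hy]
    simp [Complex.add_re, Complex.sub_re, hre, Complex.mul_re]
  · simp only [K, Set.indicator_of_notMem hy, add_zero]
    simp [Complex.sub_re, hre]

lemma K_measurable (ξ : ℝ) : Measurable (K ξ) := by
  have h1 : Measurable fun y : ℝ => (1 : ℂ) - Complex.exp (Complex.I * ξ * y) := by
    fun_prop
  have hs : MeasurableSet {y : ℝ | |y| ≤ 1} :=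
    (isClosed_le (continuous_abs : Continuous fun y : ℝ => |y|)
      continuous_const).measurableSet
  have h2 : Measurable fun y : ℝ =>
      Set.indicator {y : ℝ | |y| ≤ 1} (fun y : ℝ => Complex.I * ξ * y) y := by
    apply Measurable.indicator _ hs
    fun_prop
  exact h1.add h2

lemma K_continuous_in_xi (y : ℝ) : Continuous fun ξ : ℝ => K ξ y := by
  unfold K
  by_cases hy : y ∈ {y : ℝ | |y| ≤ 1}
  · simp only [Set.indicator_of_mem hy]
    fun_prop
  · simp only [Set.indicator_of_notMem hy, add_zero]
    fun_prop


variable {μ : Measure ℝ}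

lemma min_integrable (hμ : ∫⁻ y : ℝ, ENNReal.ofReal (min (y ^ 2) 1) ∂μ ≠ ⊤) :
    Integrable (fun y : ℝ => min (y ^ 2) 1) μ := by
  constructor
  · exact ((continuous_pow 2).min continuous_const).aestronglyMeasurable
  · rw [hasFiniteIntegral_iff_ofReal
      (Filter.Eventually.of_forall fun y => le_min (sq_nonneg y) zero_le_one)]
    exact hμ.lt_top

lemma K_integrable (hμ : ∫⁻ y : ℝ, ENNReal.ofReal (min (y ^ 2) 1) ∂μ ≠ ⊤) (ξ : ℝ) :
    Integrable (K ξ) μ :=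
  ((min_integrable hμ).const_mul (3 * ξ ^ 2 + 2)).mono'
    (K_measurable ξ).aestronglyMeasurable
    (Filter.Eventually.of_forall (K_norm_le ξ))

lemma intK_norm_le (hμ : ∫⁻ y : ℝ, ENNReal.ofReal (min (y ^ 2) 1) ∂μ ≠ ⊤) (ξ : ℝ) :
    ‖∫ y, K ξ y ∂μ‖ ≤ (3 * ξ ^ 2 + 2) * ∫ y, min (y ^ 2) 1 ∂μ := by
  refine (norm_integral_le_integral_norm _).trans ?_
  have h := integral_mono (f := fun y => ‖K ξ y‖)
    (g := fun y => (3 * ξ ^ 2 + 2) * min (y ^ 2) 1)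
    (K_integrable hμ ξ).norm ((min_integrable hμ).const_mul _) (K_norm_le ξ)
  simpa [integral_const_mul] using h

lemma intK_continuous (hμ : ∫⁻ y : ℝ, ENNReal.ofReal (min (y ^ 2) 1) ∂μ ≠ ⊤) :
    Continuous fun ξ : ℝ => ∫ y, K ξ y ∂μ := by
  rw [continuous_iff_continuousAt]
  intro ξ₀
  apply continuousAt_of_dominated (bound := fun y => (3 * (|ξ₀| + 1) ^ 2 + 2) * min (y ^ 2) 1)
  · exact Filter.Eventually.of_forall fun ξ => (K_measurable ξ).aestronglyMeasurable
  · have hball : Metric.ball ξ₀ 1 ∈ nhds ξ₀ := Metric.ball_mem_nhds ξ₀ one_pos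
    refine Filter.eventually_of_mem hball fun ξ hξ => ?_
    refine Filter.Eventually.of_forall fun y => ?_
    refine (K_norm_le ξ y).trans ?_
    have h1 : |ξ| ≤ |ξ₀| + 1 := by
      have := abs_sub_abs_le_abs_sub ξ ξ₀
      have h2 : |ξ - ξ₀| < 1 := by simpa [Real.dist_eq] using hξ
      linarith
    have h3 : ξ ^ 2 ≤ (|ξ₀| + 1) ^ 2 := by nlinarith [sq_abs ξ, abs_nonneg ξ, abs_nonneg ξ₀]
    have h4 : 0 ≤ min (y ^ 2) 1 := le_min (sq_nonneg y) zero_le_one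
    nlinarith
  · exact (min_integrable hμ).const_mul _
  · exact Filter.Eventually.of_forall fun y => (K_continuous_in_xi y).continuousAt

lemma fourierInt_eq (f : SchwartzMap ℝ ℂ) (ξ : ℝ) :
    fourierInt (⇑f) ξ = (Real.sqrt (2 * Real.pi) : ℂ)⁻¹ *
      (SchwartzMap.fourierTransformCLM ℂ f) (ξ / (2 * Real.pi)) := by
  unfold fourierInt
  congr 1
  rw [SchwartzMap.fourierTransformCLM_apply, SchwartzMap.fourier_coe, Real.fourier_real_eq_integral_exp_smul]
  refine congrArg (fun φ : ℝ → ℂ => ∫ x, φ x) (funext fun x => ?_)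
  rw [smul_eq_mul]
  congr 1
  have h0 : -2 * Real.pi * x * (ξ / (2 * Real.pi)) = -(ξ * x) := by
    field_simp
  rw [h0]
  push_cast
  ring

lemma fourierInt_cont (f : SchwartzMap ℝ ℂ) : Continuous (fourierInt (⇑f)) := by
  have h : Continuous fun ξ : ℝ => (Real.sqrt (2 * Real.pi) : ℂ)⁻¹ *
      (SchwartzMap.fourierTransformCLM ℂ f) (ξ / (2 * Real.pi)) := by
    fun_prop
  exact h.congr fun ξ => (fourierInt_eq f ξ).symm

lemma decay_int (g : SchwartzMap ℝ ℂ) :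
    Integrable (fun ξ : ℝ => (1 + ξ ^ 2) * ‖g (ξ / (2 * Real.pi))‖) volume := by
  have h1 : Integrable (fun u : ℝ => ‖g u‖ + (2 * Real.pi) ^ 2 * (‖u‖ ^ 2 * ‖g u‖)) volume :=
    (g.integrable (μ := volume)).norm.add ((g.integrable_pow_mul volume 2).const_mul _)
  have h2 := h1.comp_div (R := 2 * Real.pi) (by positivity)
  refine h2.congr (Filter.Eventually.of_forall fun ξ => ?_)
  have hπ : (2 * Real.pi) ≠ 0 := by positivity
  have : ‖ξ / (2 * Real.pi)‖ ^ 2 = ξ ^ 2 / (2 * Real.pi) ^ 2 := by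
    rw [Real.norm_eq_abs, sq_abs, div_pow]
  simp only [this]
  field_simp

lemma norm_fourierInt_le (f : SchwartzMap ℝ ℂ) (ξ : ℝ) :
    ‖fourierInt (⇑f) ξ‖ ≤ (Real.sqrt (2 * Real.pi))⁻¹ *
      ‖(SchwartzMap.fourierTransformCLM ℂ f) (ξ / (2 * Real.pi))‖ := by
  rw [fourierInt_eq, norm_mul]
  gcongr
  rw [norm_inv, Complex.norm_real, Real.norm_eq_abs,
    abs_of_nonneg (Real.sqrt_nonneg _)]


end PdoAux

open PdoAux

theorem pdo_dissipative_on_schwartz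
    (q b σsq : ℝ) (hq : 0 ≤ q) (hσ : 0 ≤ σsq)
    (μ : Measure ℝ) (hμ0 : μ {0} = 0)
    (hμ : ∫⁻ y : ℝ, ENNReal.ofReal (min (y ^ 2) 1) ∂μ ≠ ⊤)
    (ψ : ℝ → ℂ)
    (hψ : ∀ ξ : ℝ, ψ ξ = (q : ℂ) - Complex.I * b * ξ + σsq * ξ ^ 2 +
      ∫ y : ℝ, (1 - Complex.exp (Complex.I * ξ * y) +
        Set.indicator {y : ℝ | |y| ≤ 1} (fun y : ℝ => Complex.I * ξ * y) y) ∂μ)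
    (f : SchwartzMap ℝ ℂ)
    (A : ℝ → ℂ)
    (hA : ∀ x : ℝ, A x = -(Real.exp (-x) : ℂ) * (Real.sqrt (2 * Real.pi) : ℂ)⁻¹ *
      ∫ ξ : ℝ, Complex.exp (Complex.I * ξ * x) * ψ ξ * fourierInt (⇑f) ξ) :
    Integrable (fun x : ℝ => A x * (starRingEnd ℂ) (f x) * (Real.exp x : ℂ)) ∧
    (∫ x : ℝ, A x * (starRingEnd ℂ) (f x) * (Real.exp x : ℂ)).re ≤ 0 := by
  have hψ' : ∀ ξ : ℝ, ψ ξ = (q : ℂ) - Complex.I * b * ξ + σsq * ξ ^ 2 +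
      ∫ y : ℝ, K ξ y ∂μ := hψ
  set c : ℝ := Real.sqrt (2 * Real.pi) with hcdef
  have hc : 0 < c := Real.sqrt_pos.mpr (by positivity)
  have hcC : (c : ℂ) ≠ 0 := Complex.ofReal_ne_zero.mpr hc.ne'
  set M : ℝ := ∫ y, min (y ^ 2) 1 ∂μ with hMdef
  have hM0 : 0 ≤ M := integral_nonneg fun y => le_min (sq_nonneg y) zero_le_one
  set g : SchwartzMap ℝ ℂ := SchwartzMap.fourierTransformCLM ℂ f with hgdef
  -- continuity of ψ
  have hψcont : Continuous ψ := by
    have h1 : Continuous fun ξ : ℝ => (q : ℂ) - Complex.I * b * ξ + σsq * (ξ : ℂ) ^ 2 +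
        ∫ y : ℝ, K ξ y ∂μ := by
      apply Continuous.add ?_ (intK_continuous hμ)
      fun_prop
    exact h1.congr fun ξ => (hψ' ξ).symm
  -- nonnegativity of real part
  have hψre : ∀ ξ : ℝ, 0 ≤ (ψ ξ).re := by
    intro ξ
    rw [hψ' ξ]
    have h1 : (∫ y, K ξ y ∂μ).re = ∫ y, (K ξ y).re ∂μ := by
      simpa using (integral_re (K_integrable hμ ξ)).symm
    have h2 : 0 ≤ ∫ y, (K ξ y).re ∂μ := by
      apply integral_nonneg
      intro y
      show (0 : ℝ) ≤ (K ξ y).re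
      rw [K_re]
      simp [sub_nonneg, Real.cos_le_one]
    simp only [Complex.add_re, Complex.sub_re, h1]
    have e1 : (Complex.I * b * ξ).re = 0 := by simp
    have e2 : ((σsq : ℂ) * (ξ : ℂ) ^ 2).re = σsq * ξ ^ 2 := by
      rw [show ((σsq : ℂ) * (ξ : ℂ) ^ 2) = ((σsq * ξ ^ 2 : ℝ) : ℂ) by push_cast; ring]
      exact Complex.ofReal_re _
    rw [e1, e2]
    simp only [Complex.ofReal_re]
    have : 0 ≤ σsq * ξ ^ 2 := mul_nonneg hσ (sq_nonneg ξ)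
    linarith
  -- norm bound for ψ
  set C : ℝ := q + |b| + σsq + 3 * M with hCdef
  have hC0 : 0 ≤ C := by positivity
  have hψnorm : ∀ ξ : ℝ, ‖ψ ξ‖ ≤ C * (1 + ξ ^ 2) := by
    intro ξ
    rw [hψ' ξ]
    have e1 : ‖(q : ℂ)‖ = q := by rw [Complex.norm_real, Real.norm_eq_abs, abs_of_nonneg hq]
    have e2 : ‖Complex.I * b * ξ‖ = |b| * |ξ| := by
      simp [map_mul]
    have e3 : ‖(σsq : ℂ) * (ξ : ℂ) ^ 2‖ = σsq * ξ ^ 2 := by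
      rw [show ((σsq : ℂ) * (ξ : ℂ) ^ 2) = ((σsq * ξ ^ 2 : ℝ) : ℂ) by push_cast; ring]
      rw [Complex.norm_real, Real.norm_eq_abs, abs_of_nonneg (mul_nonneg hσ (sq_nonneg ξ))]
    have h4 : ‖∫ y, K ξ y ∂μ‖ ≤ (3 * ξ ^ 2 + 2) * M := by
      rw [hMdef]; exact intK_norm_le hμ ξ
    calc ‖(q : ℂ) - Complex.I * b * ξ + σsq * (ξ : ℂ) ^ 2 + ∫ y, K ξ y ∂μ‖
        ≤ ‖(q : ℂ) - Complex.I * b * ξ + σsq * (ξ : ℂ) ^ 2‖ + ‖∫ y, K ξ y ∂μ‖ :=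
          norm_add_le _ _
      _ ≤ ‖(q : ℂ) - Complex.I * b * ξ‖ + ‖(σsq : ℂ) * (ξ : ℂ) ^ 2‖ + ‖∫ y, K ξ y ∂μ‖ := by
          gcongr ?_ + _; exact norm_add_le _ _
      _ ≤ ‖(q : ℂ)‖ + ‖Complex.I * b * ξ‖ + ‖(σsq : ℂ) * (ξ : ℂ) ^ 2‖ + ‖∫ y, K ξ y ∂μ‖ := by
          gcongr ?_ + _ + _; exact norm_sub_le _ _
      _ ≤ q + |b| * |ξ| + σsq * ξ ^ 2 + (3 * ξ ^ 2 + 2) * M := by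
          rw [e1, e2, e3]; gcongr
      _ ≤ C * (1 + ξ ^ 2) := by
          rw [hCdef]
          nlinarith [mul_nonneg (abs_nonneg b) (sq_nonneg (|ξ| - 1)), sq_abs ξ,
            abs_nonneg b, sq_nonneg ξ, hM0, hq, hσ]
  -- the symbol times Fourier transform
  set h : ℝ → ℂ := fun ξ => ψ ξ * fourierInt (⇑f) ξ with hhdef
  have h_cont : Continuous h := hψcont.mul (fourierInt_cont f)
  have h_int : Integrable h := by
    apply Integrable.mono' ((decay_int g).const_mul (C * c⁻¹)) h_cont.aestronglyMeasurable
    refine Filter.Eventually.of_forall fun ξ => ?_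
    rw [hhdef]
    calc ‖ψ ξ * fourierInt (⇑f) ξ‖ = ‖ψ ξ‖ * ‖fourierInt (⇑f) ξ‖ := norm_mul _ _
      _ ≤ (C * (1 + ξ ^ 2)) * (c⁻¹ * ‖g (ξ / (2 * Real.pi))‖) := by
          apply mul_le_mul (hψnorm ξ) (norm_fourierInt_le f ξ) (norm_nonneg _)
          positivity
      _ = C * c⁻¹ * ((1 + ξ ^ 2) * ‖g (ξ / (2 * Real.pi))‖) := by ring
  have hconj : Continuous fun z : ℂ => (starRingEnd ℂ) z := by
    simp only [starRingEnd_apply]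
    exact continuous_star
  set N : ℝ := ∫ ξ, ‖h ξ‖ with hNdef
  have hN0 : 0 ≤ N := integral_nonneg fun ξ => norm_nonneg _
  set Φ : ℝ → ℂ := fun x => ∫ ξ : ℝ, Complex.exp (Complex.I * ξ * x) * h ξ with hΦdef
  have hΦcont : Continuous Φ := by
    rw [hΦdef]
    apply continuous_of_dominated (bound := fun ξ => ‖h ξ‖)
    · intro x
      exact ((by fun_prop : Continuous fun ξ : ℝ =>
        Complex.exp (Complex.I * ξ * x)).mul h_cont).aestronglyMeasurable
    · intro x
      refine Filter.Eventually.of_forall fun ξ => ?_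
      rw [norm_mul, norm_exp_I_mul, one_mul]
    · exact h_int.norm
    · exact Filter.Eventually.of_forall fun ξ => by fun_prop
  have hΦbd : ∀ x : ℝ, ‖Φ x‖ ≤ N := by
    intro x
    refine (norm_integral_le_integral_norm _).trans (le_of_eq ?_)
    rw [hNdef]
    congr 1
    funext ξ
    rw [norm_mul, norm_exp_I_mul, one_mul]
  -- rewrite the integrand
  have hmain_eq : (fun x : ℝ => A x * (starRingEnd ℂ) (f x) * (Real.exp x : ℂ)) =
      fun x : ℝ => -((c : ℂ))⁻¹ * (Φ x * (starRingEnd ℂ) (f x)) := by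
    funext x
    rw [hA x]
    have h1 : (∫ ξ : ℝ, Complex.exp (Complex.I * ξ * x) * ψ ξ * fourierInt (⇑f) ξ) = Φ x := by
      rw [hΦdef]
      exact congrArg (fun φ : ℝ → ℂ => ∫ ξ, φ ξ) (funext fun ξ => mul_assoc _ _ _)
    rw [h1]
    have h2 : ((Real.exp (-x) : ℝ) : ℂ) * ((Real.exp x : ℝ) : ℂ) = 1 := by
      rw [← Complex.ofReal_mul, ← Real.exp_add]
      norm_num
    calc -(Real.exp (-x) : ℂ) * (c : ℂ)⁻¹ * Φ x * (starRingEnd ℂ) (f x) * (Real.exp x : ℂ)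
        = -((c : ℂ))⁻¹ * (Φ x * (starRingEnd ℂ) (f x)) *
            (((Real.exp (-x) : ℝ) : ℂ) * ((Real.exp x : ℝ) : ℂ)) := by ring
      _ = -((c : ℂ))⁻¹ * (Φ x * (starRingEnd ℂ) (f x)) := by rw [h2, mul_one]
  rw [hmain_eq]
  -- integrability of the rewritten integrand
  have hInt : Integrable (fun x : ℝ => -((c : ℂ))⁻¹ * (Φ x * (starRingEnd ℂ) (f x))) := by
    apply Integrable.mono' ((f.integrable (μ := volume)).norm.const_mul (c⁻¹ * N))
    · exact (Continuous.mul continuous_const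
        (hΦcont.mul (hconj.comp f.continuous))).aestronglyMeasurable
    · refine Filter.Eventually.of_forall fun x => ?_
      rw [norm_mul, norm_neg, norm_inv, Complex.norm_real, Real.norm_eq_abs,
        abs_of_nonneg hc.le, norm_mul, RCLike.norm_conj]
      calc c⁻¹ * (‖Φ x‖ * ‖f x‖) ≤ c⁻¹ * (N * ‖f x‖) := by
            gcongr
            exact hΦbd x
        _ = c⁻¹ * N * ‖f x‖ := by ring
  refine ⟨hInt, ?_⟩
  -- Fubini
  have hprod : Integrable
      (Function.uncurry fun (x ξ : ℝ) =>
        Complex.exp (Complex.I * ξ * x) * h ξ * (starRingEnd ℂ) (f x))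
      (volume.prod volume) := by
    have hb : Integrable (fun z : ℝ × ℝ => ‖f z.1‖ * ‖h z.2‖) (volume.prod volume) :=
      Integrable.mul_prod (f.integrable (μ := volume)).norm h_int.norm
    apply hb.mono'
    · apply Continuous.aestronglyMeasurable
      apply Continuous.mul
      apply Continuous.mul
      · fun_prop
      · exact h_cont.comp continuous_snd
      · exact hconj.comp (f.continuous.comp continuous_fst)
    · refine Filter.Eventually.of_forall fun p => ?_
      simp only [Function.uncurry]
      rw [norm_mul, norm_mul, norm_exp_I_mul, one_mul, RCLike.norm_conj, mul_comm]
  have hswap := integral_integral_swap hprod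
  -- the inner x-integral
  have hXint : ∀ ξ : ℝ, (∫ x : ℝ, Complex.exp (Complex.I * ξ * x) * (starRingEnd ℂ) (f x)) =
      (c : ℂ) * (starRingEnd ℂ) (fourierInt (⇑f) ξ) := by
    intro ξ
    have h1 : ∀ x : ℝ, Complex.exp (Complex.I * ξ * x) * (starRingEnd ℂ) (f x) =
        (starRingEnd ℂ) (Complex.exp (-Complex.I * ξ * x) * f x) := by
      intro x
      rw [map_mul, ← Complex.exp_conj]
      congr 2
      simp [map_mul]
    have h2 : (∫ x : ℝ, Complex.exp (-Complex.I * ξ * x) * f x) = (c : ℂ) * fourierInt (⇑f) ξ := by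
      rw [show fourierInt (⇑f) ξ = (c : ℂ)⁻¹ * ∫ x : ℝ, Complex.exp (-Complex.I * ξ * x) * f x
        from rfl]
      rw [← mul_assoc, mul_inv_cancel₀ hcC, one_mul]
    calc (∫ x : ℝ, Complex.exp (Complex.I * ξ * x) * (starRingEnd ℂ) (f x))
        = ∫ x : ℝ, (starRingEnd ℂ) (Complex.exp (-Complex.I * ξ * x) * f x) :=
          congrArg (fun φ : ℝ → ℂ => ∫ x, φ x) (funext h1)
      _ = (starRingEnd ℂ) (∫ x : ℝ, Complex.exp (-Complex.I * ξ * x) * f x) := integral_conj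
      _ = (starRingEnd ℂ) ((c : ℂ) * fourierInt (⇑f) ξ) := by rw [h2]
      _ = (c : ℂ) * (starRingEnd ℂ) (fourierInt (⇑f) ξ) := by
          rw [map_mul, Complex.conj_ofReal]
  -- the value of the integral
  have hval : (∫ x : ℝ, -((c : ℂ))⁻¹ * (Φ x * (starRingEnd ℂ) (f x))) =
      -∫ ξ : ℝ, ψ ξ * ((Complex.normSq (fourierInt (⇑f) ξ) : ℝ) : ℂ) := by
    rw [integral_const_mul]
    have e1 : (∫ x : ℝ, Φ x * (starRingEnd ℂ) (f x)) =
        ∫ x : ℝ, ∫ ξ : ℝ, Complex.exp (Complex.I * ξ * x) * h ξ * (starRingEnd ℂ) (f x) := by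
      refine congrArg (fun φ : ℝ → ℂ => ∫ x, φ x) (funext fun x => ?_)
      rw [hΦdef]
      exact (integral_mul_const _ _).symm
    have e2 : ∀ ξ : ℝ, (∫ x : ℝ, Complex.exp (Complex.I * ξ * x) * h ξ * (starRingEnd ℂ) (f x)) =
        (c : ℂ) * (ψ ξ * ((Complex.normSq (fourierInt (⇑f) ξ) : ℝ) : ℂ)) := by
      intro ξ
      have : (∫ x : ℝ, Complex.exp (Complex.I * ξ * x) * h ξ * (starRingEnd ℂ) (f x)) =
          h ξ * ∫ x : ℝ, Complex.exp (Complex.I * ξ * x) * (starRingEnd ℂ) (f x) := by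
        rw [← integral_const_mul]
        exact congrArg (fun φ : ℝ → ℂ => ∫ x, φ x) (funext fun x => by ring)
      rw [this, hXint ξ, hhdef]
      rw [← Complex.mul_conj (fourierInt (⇑f) ξ)]
      ring
    rw [e1, hswap]
    rw [show (∫ ξ : ℝ, ∫ x : ℝ, Complex.exp (Complex.I * ξ * x) * h ξ * (starRingEnd ℂ) (f x)) =
        ∫ ξ : ℝ, (c : ℂ) * (ψ ξ * ((Complex.normSq (fourierInt (⇑f) ξ) : ℝ) : ℂ)) from
      congrArg (fun φ : ℝ → ℂ => ∫ ξ, φ ξ) (funext e2)]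
    rw [integral_const_mul, ← mul_assoc, neg_mul, inv_mul_cancel₀ hcC, neg_one_mul]
  rw [hval]
  -- integrability of the final integrand
  have hFbd : ∀ ξ : ℝ, ‖fourierInt (⇑f) ξ‖ ≤ c⁻¹ * ∫ x : ℝ, ‖f x‖ := by
    intro ξ
    rw [show fourierInt (⇑f) ξ =
      (c : ℂ)⁻¹ * ∫ x : ℝ, Complex.exp (-Complex.I * ξ * x) * f x from rfl]
    rw [norm_mul, norm_inv, Complex.norm_real, Real.norm_eq_abs, abs_of_nonneg hc.le]
    gcongr
    refine (norm_integral_le_integral_norm _).trans (le_of_eq ?_)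
    congr 1
    funext x
    rw [norm_mul]
    rw [show -Complex.I * (ξ : ℂ) * (x : ℝ) = Complex.I * ((-ξ : ℝ) : ℂ) * (x : ℝ) by
      push_cast; ring]
    rw [norm_exp_I_mul, one_mul]
  set B : ℝ := c⁻¹ * ∫ x : ℝ, ‖f x‖ with hBdef
  have hB0 : 0 ≤ B := by
    rw [hBdef]
    have : 0 ≤ ∫ x : ℝ, ‖f x‖ := integral_nonneg fun x => norm_nonneg _
    positivity
  have w_int : Integrable
      (fun ξ : ℝ => ψ ξ * ((Complex.normSq (fourierInt (⇑f) ξ) : ℝ) : ℂ)) := by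
    apply Integrable.mono' (h_int.norm.const_mul B)
    · exact (hψcont.mul (Complex.continuous_ofReal.comp
        (Complex.continuous_normSq.comp (fourierInt_cont f)))).aestronglyMeasurable
    · refine Filter.Eventually.of_forall fun ξ => ?_
      have e1 : ‖((Complex.normSq (fourierInt (⇑f) ξ) : ℝ) : ℂ)‖ =
          ‖fourierInt (⇑f) ξ‖ * ‖fourierInt (⇑f) ξ‖ := by
        rw [Complex.norm_real, Real.norm_eq_abs,
          abs_of_nonneg (Complex.normSq_nonneg _), Complex.normSq_eq_norm_sq]
        rw [sq]
      rw [norm_mul, e1]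
      have e2 : ‖h ξ‖ = ‖ψ ξ‖ * ‖fourierInt (⇑f) ξ‖ := norm_mul _ _
      rw [e2]
      calc ‖ψ ξ‖ * (‖fourierInt (⇑f) ξ‖ * ‖fourierInt (⇑f) ξ‖)
          ≤ ‖ψ ξ‖ * (‖fourierInt (⇑f) ξ‖ * B) := by
            gcongr
            exact hFbd ξ
        _ = B * (‖ψ ξ‖ * ‖fourierInt (⇑f) ξ‖) := by ring
  have hre : (∫ ξ : ℝ, ψ ξ * ((Complex.normSq (fourierInt (⇑f) ξ) : ℝ) : ℂ)).re =
      ∫ ξ : ℝ, (ψ ξ * ((Complex.normSq (fourierInt (⇑f) ξ) : ℝ) : ℂ)).re := by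
    simpa using (integral_re w_int).symm
  rw [Complex.neg_re, hre]
  have hnn : 0 ≤ ∫ ξ : ℝ, (ψ ξ * ((Complex.normSq (fourierInt (⇑f) ξ) : ℝ) : ℂ)).re := by
    apply integral_nonneg
    intro ξ
    show (0 : ℝ) ≤ (ψ ξ * ((Complex.normSq (fourierInt (⇑f) ξ) : ℝ) : ℂ)).re
    have : (ψ ξ * ((Complex.normSq (fourierInt (⇑f) ξ) : ℝ) : ℂ)).re =
        (ψ ξ).re * Complex.normSq (fourierInt (⇑f) ξ) := by
      simp [Complex.mul_re]
    rw [this]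
    exact mul_nonneg (hψre ξ) (Complex.normSq_nonneg _)
  linarith
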